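/- The l-fold nested Poisson bracket satisfies the norm bound ‖{H_Λ, M^β}^{(l)}‖_∞ ≤ l! e^{|β|} ‖V‖^l, where {H,A}^{(l)} = {H, {H,A}^{(l-1)}}, {H,A}^{(0)} = A, the sup-norm is over the product of closed unit balls Ξ_Λ, and ‖V‖ := Σ_{n≥1} sup_x Σ_{|α|=n} |α(x)| |V(α)| e^n. -/

import Mathlib

open scoped BigOperators

/-- The index set `I = {+, z, -}` of complex spin coordinates. -/
inductive Idx : Type
  | plus | z | minus
deriving DecidableEq

instance : Fintype Idx :=
  ⟨{.plus, .z, .minus}, fun i => by cases i <;> first | decide | simp⟩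

/-- The symbol `ε̃_{ijk}`: `ε̃_{+−z} = 1`, `ε̃_{−+z} = −1`, `ε̃_{+z+} = −1`,
`ε̃_{−z−} = 1`, `ε̃_{z++} = 1`, `ε̃_{z−−} = −1`, and `ε̃_{ijk} = 0` otherwise. -/
def eps : Idx → Idx → Idx → ℂ
  | .plus, .minus, .z => 1
  | .minus, .plus, .z => -1
  | .plus, .z, .plus => -1
  | .minus, .z, .minus => 1
  | .z, .plus, .plus => 1
  | .z, .minus, .minus => -1
  | _, _, _ => 0

/-- Conjugation `+ ↦ −`, `z ↦ z`, `− ↦ +` on the index set. -/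
def Idx.bar : Idx → Idx
  | .plus => .minus
  | .z => .z
  | .minus => .plus

/-- The complex coordinates `(M_+, M_z, M_-)` of a vector `M ∈ ℝ³`:
`M_± = (M_1 ± i M_2)/√2`, `M_z = M_3`. -/
noncomputable def coord : Idx → (Fin 3 → ℝ) → ℂ
  | .plus => fun v => ((v 0 : ℂ) + Complex.I * (v 1 : ℂ)) / (Real.sqrt 2 : ℂ)
  | .z => fun v => (v 2 : ℂ)
  | .minus => fun v => ((v 0 : ℂ) - Complex.I * (v 1 : ℂ)) / (Real.sqrt 2 : ℂ)

variable {Λ : Type*}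

/-- Membership in the phase space `Ξ_Λ = Π_{x∈Λ} B̄₁(0)`. -/
def inBall (M : Λ → Fin 3 → ℝ) : Prop :=
  ∀ x, (M x 0) ^ 2 + (M x 1) ^ 2 + (M x 2) ^ 2 ≤ 1

/-- The monomial `M^α`. -/
noncomputable def monom (α : (Idx × Λ) →₀ ℕ) : MvPolynomial (Idx × Λ) ℂ :=
  MvPolynomial.monomial α 1

/-- Evaluation of a polynomial observable at a spin configuration `M`. -/
noncomputable def evalAt (M : Λ → Fin 3 → ℝ) (F : MvPolynomial (Idx × Λ) ℂ) : ℂ :=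
  MvPolynomial.eval (fun p => coord p.1 (M p.2)) F

/-- Evaluation of the monomial `M^γ` at a (possibly infinite-volume) spin
configuration `M`. -/
noncomputable def evalMonom (M : Λ → Fin 3 → ℝ) (γ : (Idx × Λ) →₀ ℕ) : ℂ :=
  γ.prod fun p m => (coord p.1 (M p.2)) ^ m

/-- The degree `|α|` of a multi-index. -/
def deg (α : (Idx × Λ) →₀ ℕ) : ℕ := α.sum fun _ m => m

/-- `|α(x)| = Σ_{i∈I} α_i(x)`. -/
def wt (α : (Idx × Λ) →₀ ℕ) (x : Λ) : ℕ := ∑ i : Idx, α (i, x)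

/-- The conjugate multi-index `ᾱ`, with `ᾱ_i(x) = α_{ī}(x)`. -/
def barMulti [DecidableEq Λ] (α : (Idx × Λ) →₀ ℕ) : (Idx × Λ) →₀ ℕ :=
  α.equivMapDomain
    (Equiv.prodCongr ⟨Idx.bar, Idx.bar, fun i => by cases i <;> rfl,
      fun i => by cases i <;> rfl⟩ (Equiv.refl Λ))

/-- `Σ_{|α| = n} |α(x)| |V(α)|`. -/
noncomputable def VnormPart (V : ((Idx × Λ) →₀ ℕ) → ℂ) (n : ℕ) (x : Λ) : ℝ :=
  ∑' α : {α : (Idx × Λ) →₀ ℕ // deg α = n}, (wt α.1 x : ℝ) * ‖V α.1‖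

/-- The norm `‖V‖ = Σ_n sup_x Σ_{|α|=n} |α(x)| |V(α)| e^n` of an interaction
potential. -/
noncomputable def Vnorm [Nonempty Λ] (V : ((Idx × Λ) →₀ ℕ) → ℂ) : ℝ :=
  ∑' n : ℕ, (⨆ x : Λ, VnormPart V n x) * Real.exp n

section Bracket

variable [Fintype Λ] [DecidableEq Λ]

/-- The Poisson bracket on the polynomial algebra `P_Λ`, the unique biderivation
with `{M_i(x), M_j(y)} = i ε̃_{ijk} δ(x,y) M_k(x)`. -/
noncomputable def pb (F G : MvPolynomial (Idx × Λ) ℂ) : MvPolynomial (Idx × Λ) ℂ :=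
  ∑ x : Λ, ∑ i : Idx, ∑ j : Idx, ∑ k : Idx,
    MvPolynomial.C (Complex.I * eps i j k) *
      (MvPolynomial.pderiv (i, x) F) * (MvPolynomial.pderiv (j, x) G) *
        MvPolynomial.X (k, x)

/-- The iterated Poisson bracket `{H, A}^{(l)}`. -/
noncomputable def pbIter (H : MvPolynomial (Idx × Λ) ℂ) :
    ℕ → MvPolynomial (Idx × Λ) ℂ → MvPolynomial (Idx × Λ) ℂ
  | 0, A => A
  | l + 1, A => pb H (pbIter H l A)

/-- The sup-norm `‖A‖_∞ = sup_{M ∈ Ξ_Λ} |A(M)|` of a polynomial observable. -/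
noncomputable def supNorm (F : MvPolynomial (Idx × Λ) ℂ) : ℝ :=
  ⨆ M : {M : Λ → Fin 3 → ℝ // inBall M}, ‖evalAt M.1 F‖

/-- The classical Hamilton function `H_Λ = Σ_α V(α) M^α` of a finitely supported
interaction potential. -/
noncomputable def Hcl (V : ((Idx × Λ) →₀ ℕ) →₀ ℂ) : MvPolynomial (Idx × Λ) ℂ :=
  ∑ α ∈ V.support, MvPolynomial.C (V α) * monom α

end Bracket



/-! ### Auxiliary machinery for the proof -/

section AuxProof

open MvPolynomial

lemma Idx.sum_univ {M : Type*} [AddCommMonoid M] (f : Idx → M) :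
    ∑ k : Idx, f k = f .plus + f .z + f .minus := by
  rw [show (Finset.univ : Finset Idx) = {Idx.plus, Idx.z, Idx.minus} from by decide]
  rw [Finset.sum_insert (by decide), Finset.sum_insert (by decide), Finset.sum_singleton,
    add_assoc]

lemma sum_abs_eps (i j : Idx) : ∑ k : Idx, ‖eps i j k‖ ≤ 1 := by
  cases i <;> cases j <;> simp [Idx.sum_univ, eps]

variable {Λ : Type} [Fintype Λ] [DecidableEq Λ]

/-- Weighted ℓ¹ norm of coefficients, with weight `exp (t |γ|)`. -/
noncomputable def wsum (t : ℝ) (F : MvPolynomial (Idx × Λ) ℂ) : ℝ :=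
  ∑ γ ∈ F.support, ‖F.coeff γ‖ * Real.exp (t * deg γ)

lemma wsum_nonneg (t : ℝ) (F : MvPolynomial (Idx × Λ) ℂ) : 0 ≤ wsum t F :=
  Finset.sum_nonneg fun γ _ => mul_nonneg (norm_nonneg _) (Real.exp_pos _).le

lemma wsum_eq_sum_subset {t : ℝ} {F : MvPolynomial (Idx × Λ) ℂ} {s : Finset ((Idx × Λ) →₀ ℕ)}
    (h : F.support ⊆ s) :
    wsum t F = ∑ γ ∈ s, ‖F.coeff γ‖ * Real.exp (t * deg γ) :=
  Finset.sum_subset h fun γ _ hγ => by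
    rw [MvPolynomial.notMem_support_iff.mp hγ]; simp

lemma wsum_zero (t : ℝ) : wsum t (0 : MvPolynomial (Idx × Λ) ℂ) = 0 := by
  simp [wsum]

lemma wsum_add_le (t : ℝ) (F G : MvPolynomial (Idx × Λ) ℂ) :
    wsum t (F + G) ≤ wsum t F + wsum t G := by
  classical
  rw [wsum_eq_sum_subset (MvPolynomial.support_add (p := F) (q := G)),
    wsum_eq_sum_subset (Finset.subset_union_left : F.support ⊆ F.support ∪ G.support),
    wsum_eq_sum_subset (Finset.subset_union_right : G.support ⊆ F.support ∪ G.support),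
    ← Finset.sum_add_distrib]
  refine Finset.sum_le_sum fun γ _ => ?_
  rw [MvPolynomial.coeff_add, ← add_mul]
  exact mul_le_mul_of_nonneg_right (norm_add_le _ _) (Real.exp_pos _).le

lemma wsum_sum_le {ι : Type*} (t : ℝ) (s : Finset ι) (f : ι → MvPolynomial (Idx × Λ) ℂ) :
    wsum t (∑ a ∈ s, f a) ≤ ∑ a ∈ s, wsum t (f a) := by
  classical
  induction s using Finset.cons_induction with
  | empty => simp [wsum_zero]
  | cons a s ha ih =>
    rw [Finset.sum_cons, Finset.sum_cons]
    exact (wsum_add_le _ _ _).trans (by gcongr)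

lemma wsum_monomial_le (t : ℝ) (δ : (Idx × Λ) →₀ ℕ) (c : ℂ) :
    wsum t (MvPolynomial.monomial δ c) ≤ ‖c‖ * Real.exp (t * deg δ) := by
  by_cases hc : c = 0
  · rw [hc, map_zero, wsum_zero]; positivity
  · rw [wsum, MvPolynomial.support_monomial]
    simp [hc, MvPolynomial.coeff_monomial]

lemma wsum_monom (t : ℝ) (β : (Idx × Λ) →₀ ℕ) :
    wsum t (monom β : MvPolynomial (Idx × Λ) ℂ) = Real.exp (t * deg β) := by
  rw [wsum, monom, MvPolynomial.support_monomial]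
  simp [MvPolynomial.coeff_monomial]

/-! ### Degree lemmas -/

lemma deg_add (α β : (Idx × Λ) →₀ ℕ) : deg (α + β) = deg α + deg β :=
  Finsupp.sum_add_index' (fun _ => rfl) (fun _ _ _ => rfl)

lemma deg_single (p : Idx × Λ) (n : ℕ) : deg (Finsupp.single p n) = n :=
  Finsupp.sum_single_index rfl

lemma deg_sub_single {α : (Idx × Λ) →₀ ℕ} {p : Idx × Λ} (h : α p ≠ 0) :
    deg (α - Finsupp.single p 1) + 1 = deg α := by
  have key : (α - Finsupp.single p 1) + Finsupp.single p 1 = α := by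
    ext q
    rcases eq_or_ne q p with rfl | hq
    · simp only [Finsupp.add_apply, Finsupp.tsub_apply, Finsupp.single_eq_same]
      omega
    · simp [Finsupp.add_apply, Finsupp.tsub_apply, Finsupp.single_eq_of_ne' (Ne.symm hq)]
  conv_rhs => rw [← key]
  rw [deg_add, deg_single]

lemma wt_sum (γ : (Idx × Λ) →₀ ℕ) : ∑ x : Λ, wt γ x = deg γ := by
  have h : deg γ = ∑ p : Idx × Λ, γ p := Finsupp.sum_fintype _ _ (fun _ => rfl)
  rw [h, Fintype.sum_prod_type, Finset.sum_comm]
  rfl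

/-! ### Evaluation bound -/

lemma norm_coord_le (i : Idx) (v : Fin 3 → ℝ) (hv : v 0 ^ 2 + v 1 ^ 2 + v 2 ^ 2 ≤ 1) :
    ‖coord i v‖ ≤ 1 := by
  have h2 : (1 : ℝ) ≤ Real.sqrt 2 := by
    rw [show (1:ℝ) = Real.sqrt 1 from (Real.sqrt_one).symm]
    exact Real.sqrt_le_sqrt (by norm_num)
  have hnum : ∀ b : ℝ, b ^ 2 = (v 1) ^ 2 →
      ‖((v 0 : ℂ) + (b : ℂ) * Complex.I)‖ ≤ 1 := by
    intro b hb
    rw [Complex.norm_add_mul_I]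
    rw [show (1:ℝ) = Real.sqrt 1 from (Real.sqrt_one).symm]
    apply Real.sqrt_le_sqrt
    nlinarith [sq_nonneg (v 2)]
  have hden : ‖((Real.sqrt 2 : ℝ) : ℂ)‖ = Real.sqrt 2 := by
    rw [Complex.norm_real, Real.norm_eq_abs, abs_of_nonneg (Real.sqrt_nonneg _)]
  cases i with
  | z =>
    simp only [coord, Complex.norm_real]
    have : (v 2) ^ 2 ≤ 1 := by nlinarith [sq_nonneg (v 0), sq_nonneg (v 1)]
    rw [Real.norm_eq_abs]
    nlinarith [abs_nonneg (v 2), sq_abs (v 2)]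
  | plus =>
    simp only [coord]
    rw [norm_div, hden]
    have h1 : ‖((v 0 : ℂ) + Complex.I * (v 1 : ℂ))‖ ≤ 1 := by
      rw [show ((v 0 : ℂ) + Complex.I * (v 1 : ℂ)) = ((v 0 : ℂ) + ((v 1 : ℝ) : ℂ) * Complex.I)
        from by ring]
      exact hnum (v 1) rfl
    calc ‖((v 0 : ℂ) + Complex.I * (v 1 : ℂ))‖ / Real.sqrt 2 ≤ 1 / 1 :=
          div_le_div₀ (by norm_num) h1 (by norm_num) h2
      _ = 1 := by norm_num
  | minus =>
    simp only [coord]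
    rw [norm_div, hden]
    have h1 : ‖((v 0 : ℂ) - Complex.I * (v 1 : ℂ))‖ ≤ 1 := by
      rw [show ((v 0 : ℂ) - Complex.I * (v 1 : ℂ)) = ((v 0 : ℂ) + ((-(v 1) : ℝ) : ℂ) * Complex.I)
        from by push_cast; ring]
      exact hnum (-(v 1)) (by ring)
    calc ‖((v 0 : ℂ) - Complex.I * (v 1 : ℂ))‖ / Real.sqrt 2 ≤ 1 / 1 :=
          div_le_div₀ (by norm_num) h1 (by norm_num) h2
      _ = 1 := by norm_num

lemma norm_evalAt_le {M : Λ → Fin 3 → ℝ} (hM : inBall M) (F : MvPolynomial (Idx × Λ) ℂ) :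
    ‖evalAt M F‖ ≤ wsum 0 F := by
  rw [evalAt, MvPolynomial.eval_eq, wsum]
  refine (norm_sum_le _ _).trans (Finset.sum_le_sum fun γ _ => ?_)
  rw [norm_mul, zero_mul, Real.exp_zero, mul_one]
  have hF : ‖∏ p ∈ γ.support, coord p.1 (M p.2) ^ γ p‖ ≤ 1 := by
    rw [norm_prod]
    refine Finset.prod_le_one (fun p _ => by positivity) fun p _ => ?_
    rw [norm_pow]
    exact pow_le_one₀ (norm_nonneg _) (norm_coord_le _ _ (hM p.2))
  calc ‖MvPolynomial.coeff γ F‖ * ‖∏ p ∈ γ.support, coord p.1 (M p.2) ^ γ p‖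
      ≤ ‖MvPolynomial.coeff γ F‖ * 1 := by gcongr
    _ = ‖F.coeff γ‖ := mul_one _

lemma supNorm_le_wsum_zero (F : MvPolynomial (Idx × Λ) ℂ) : supNorm F ≤ wsum 0 F := by
  haveI : Nonempty {M : Λ → Fin 3 → ℝ // inBall M} :=
    ⟨⟨fun _ _ => 0, fun x => by norm_num⟩⟩
  exact ciSup_le fun M => norm_evalAt_le M.2 F

/-! ### Poisson bracket structure lemmas -/

lemma pb_zero_right (F : MvPolynomial (Idx × Λ) ℂ) : pb F 0 = 0 := by
  simp [pb]

lemma pb_add_right (F G₁ G₂ : MvPolynomial (Idx × Λ) ℂ) :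
    pb F (G₁ + G₂) = pb F G₁ + pb F G₂ := by
  simp [pb, map_add, mul_add, add_mul, Finset.sum_add_distrib]

lemma pb_sum_right {ι : Type*} (F : MvPolynomial (Idx × Λ) ℂ) (s : Finset ι)
    (f : ι → MvPolynomial (Idx × Λ) ℂ) :
    pb F (∑ a ∈ s, f a) = ∑ a ∈ s, pb F (f a) := by
  classical
  induction s using Finset.cons_induction with
  | empty => simp [pb_zero_right]
  | cons a s ha ih => rw [Finset.sum_cons, pb_add_right, ih, Finset.sum_cons]

lemma pb_zero_left (G : MvPolynomial (Idx × Λ) ℂ) : pb 0 G = 0 := by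
  simp [pb]

lemma pb_add_left (F₁ F₂ G : MvPolynomial (Idx × Λ) ℂ) :
    pb (F₁ + F₂) G = pb F₁ G + pb F₂ G := by
  simp [pb, map_add, mul_add, add_mul, Finset.sum_add_distrib]

lemma pb_sum_left {ι : Type*} (s : Finset ι) (f : ι → MvPolynomial (Idx × Λ) ℂ)
    (G : MvPolynomial (Idx × Λ) ℂ) :
    pb (∑ a ∈ s, f a) G = ∑ a ∈ s, pb (f a) G := by
  classical
  induction s using Finset.cons_induction with
  | empty => simp [pb_zero_left]
  | cons a s ha ih => rw [Finset.sum_cons, pb_add_left, ih, Finset.sum_cons]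

lemma pb_monomial (α γ : (Idx × Λ) →₀ ℕ) (c d : ℂ) :
    pb (MvPolynomial.monomial α c) (MvPolynomial.monomial γ d) =
      ∑ x : Λ, ∑ i : Idx, ∑ j : Idx, ∑ k : Idx,
        MvPolynomial.monomial
          (α - Finsupp.single (i, x) 1 + (γ - Finsupp.single (j, x) 1) + Finsupp.single (k, x) 1)
          (Complex.I * eps i j k * (c * α (i, x)) * (d * γ (j, x))) := by
  unfold pb
  refine Finset.sum_congr rfl fun x _ => Finset.sum_congr rfl fun i _ =>
    Finset.sum_congr rfl fun j _ => Finset.sum_congr rfl fun k _ => ?_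
  have hX : (MvPolynomial.X (k, x) : MvPolynomial (Idx × Λ) ℂ) =
      MvPolynomial.monomial (Finsupp.single (k, x) 1) 1 := rfl
  rw [MvPolynomial.pderiv_monomial, MvPolynomial.pderiv_monomial, hX,
    MvPolynomial.C_mul_monomial, MvPolynomial.monomial_mul, MvPolynomial.monomial_mul]
  rw [mul_one]

/-! ### The basic estimate for brackets of monomials -/

lemma wsum_pb_monomial_le {s : ℝ} (α γ : (Idx × Λ) →₀ ℕ) (c d : ℂ) :
    wsum s (pb (MvPolynomial.monomial α c) (MvPolynomial.monomial γ d)) ≤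
      ∑ x : Λ, ‖c‖ * ‖d‖ * ((wt α x : ℝ) * (wt γ x : ℝ)) *
        Real.exp (s * deg α + s * deg γ - s) := by
  rw [pb_monomial]
  set E := Real.exp (s * deg α + s * deg γ - s) with hE
  have hE0 : 0 ≤ E := (Real.exp_pos _).le
  refine (wsum_sum_le _ _ _).trans ?_
  refine Finset.sum_le_sum fun x _ => ?_
  have term_bound : ∀ i j k : Idx,
      wsum s (MvPolynomial.monomial
        (α - Finsupp.single (i, x) 1 + (γ - Finsupp.single (j, x) 1) + Finsupp.single (k, x) 1)
        (Complex.I * eps i j k * (c * α (i, x)) * (d * γ (j, x)))) ≤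
      ‖eps i j k‖ * (‖c‖ * ‖d‖ * ((α (i, x) : ℝ) * (γ (j, x) : ℝ)) * E) := by
    intro i j k
    by_cases hα : α (i, x) = 0
    · have hz : (Complex.I * eps i j k * (c * (α (i, x) : ℂ)) * (d * (γ (j, x) : ℂ))) = 0 := by
        rw [hα]; push_cast; ring
      rw [hz, map_zero, wsum_zero]
      positivity
    by_cases hγ : γ (j, x) = 0
    · have hz : (Complex.I * eps i j k * (c * (α (i, x) : ℂ)) * (d * (γ (j, x) : ℂ))) = 0 := by
        rw [hγ]; push_cast; ring
      rw [hz, map_zero, wsum_zero]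
      positivity
    · refine (wsum_monomial_le _ _ _).trans (le_of_eq ?_)
      have hdeg : ((deg (α - Finsupp.single (i, x) 1 + (γ - Finsupp.single (j, x) 1)
          + Finsupp.single (k, x) 1) : ℕ) : ℝ) = (deg α : ℝ) + (deg γ : ℝ) - 1 := by
        have h1 := deg_sub_single (p := (i, x)) hα
        have h2 := deg_sub_single (p := (j, x)) hγ
        rw [deg_add, deg_add, deg_single]
        push_cast [← h1, ← h2]
        ring
      have hnorm : ‖Complex.I * eps i j k * (c * (α (i, x) : ℂ)) * (d * (γ (j, x) : ℂ))‖ =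
          ‖eps i j k‖ * (‖c‖ * ‖d‖ * ((α (i, x) : ℝ) * (γ (j, x) : ℝ))) := by
        simp only [norm_mul, Complex.norm_I, Complex.norm_natCast]
        ring
      rw [hnorm, hdeg, hE]
      rw [show s * ((deg α : ℝ) + (deg γ : ℝ) - 1) = s * deg α + s * deg γ - s from by ring]
      ring
  calc wsum s (∑ i : Idx, ∑ j : Idx, ∑ k : Idx, MvPolynomial.monomial
          (α - Finsupp.single (i, x) 1 + (γ - Finsupp.single (j, x) 1) + Finsupp.single (k, x) 1)
          (Complex.I * eps i j k * (c * α (i, x)) * (d * γ (j, x))))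
      ≤ ∑ i : Idx, ∑ j : Idx, ∑ k : Idx, wsum s (MvPolynomial.monomial
          (α - Finsupp.single (i, x) 1 + (γ - Finsupp.single (j, x) 1) + Finsupp.single (k, x) 1)
          (Complex.I * eps i j k * (c * α (i, x)) * (d * γ (j, x)))) := by
        refine (wsum_sum_le _ _ _).trans (Finset.sum_le_sum fun i _ =>
          (wsum_sum_le _ _ _).trans (Finset.sum_le_sum fun j _ => wsum_sum_le _ _ _))
    _ ≤ ∑ i : Idx, ∑ j : Idx, ∑ k : Idx,
          ‖eps i j k‖ * (‖c‖ * ‖d‖ * ((α (i, x) : ℝ) * (γ (j, x) : ℝ)) * E) := by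
        exact Finset.sum_le_sum fun i _ => Finset.sum_le_sum fun j _ =>
          Finset.sum_le_sum fun k _ => term_bound i j k
    _ ≤ ∑ i : Idx, ∑ j : Idx, ‖c‖ * ‖d‖ * ((α (i, x) : ℝ) * (γ (j, x) : ℝ)) * E := by
        refine Finset.sum_le_sum fun i _ => Finset.sum_le_sum fun j _ => ?_
        rw [← Finset.sum_mul]
        calc (∑ k : Idx, ‖eps i j k‖) * (‖c‖ * ‖d‖ * ((α (i, x) : ℝ) * (γ (j, x) : ℝ)) * E)
            ≤ 1 * (‖c‖ * ‖d‖ * ((α (i, x) : ℝ) * (γ (j, x) : ℝ)) * E) := by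
              refine mul_le_mul_of_nonneg_right (sum_abs_eps i j) (by positivity)
          _ = _ := one_mul _
    _ = ‖c‖ * ‖d‖ * ((wt α x : ℝ) * (wt γ x : ℝ)) * E := by
        have hw : (wt α x : ℝ) * (wt γ x : ℝ) =
            ∑ i : Idx, ∑ j : Idx, (α (i, x) : ℝ) * (γ (j, x) : ℝ) := by
          unfold wt; push_cast
          exact Finset.sum_mul_sum _ _ _ _
        rw [hw]
        simp only [Finset.mul_sum, Finset.sum_mul]

/-! ### Bounding sums against `Vnorm` -/

lemma VnormPart_eq (V : ((Idx × Λ) →₀ ℕ) →₀ ℂ) (n : ℕ) (x : Λ) :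
    VnormPart (fun α => V α) n x =
      ∑ α ∈ V.support.filter (fun α => deg α = n), (wt α x : ℝ) * ‖V α‖ := by
  classical
  have h := tsum_eq_sum (L := SummationFilter.unconditional _) (f := fun (α : {α : (Idx × Λ) →₀ ℕ // deg α = n}) =>
      (wt α.1 x : ℝ) * ‖V α.1‖) (s := V.support.subtype (fun α => deg α = n)) ?_
  · rw [VnormPart, h]
    exact Finset.sum_subtype_eq_sum_filter
      (f := fun α => (wt α x : ℝ) * ‖V α‖) (p := fun α => deg α = n)
  · intro b hb
    have hb' : (b : (Idx × Λ) →₀ ℕ) ∉ V.support := fun h =>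
      hb (Finset.mem_subtype.mpr h)
    simp [Finsupp.notMem_support_iff.mp hb']

lemma VnormPart_nonneg (W : ((Idx × Λ) →₀ ℕ) → ℂ) (n : ℕ) (x : Λ) :
    0 ≤ VnormPart W n x :=
  tsum_nonneg fun α => mul_nonneg (Nat.cast_nonneg _) (norm_nonneg _)

lemma iSup_VnormPart_nonneg [Nonempty Λ] (W : ((Idx × Λ) →₀ ℕ) → ℂ) (n : ℕ) :
    0 ≤ ⨆ x : Λ, VnormPart W n x := by
  obtain ⟨x₀⟩ := ‹Nonempty Λ›
  exact (VnormPart_nonneg W n x₀).trans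
    (le_ciSup (Set.Finite.bddAbove (Set.finite_range _)) x₀)

lemma Vnorm_nonneg [Nonempty Λ] (W : ((Idx × Λ) →₀ ℕ) → ℂ) : 0 ≤ Vnorm W :=
  tsum_nonneg fun n => mul_nonneg (iSup_VnormPart_nonneg W n) (Real.exp_pos _).le

lemma sum_V_bound [Nonempty Λ] (V : ((Idx × Λ) →₀ ℕ) →₀ ℂ) {s : ℝ} (hs0 : 0 ≤ s)
    (hs1 : s ≤ 1) (x : Λ) :
    ∑ α ∈ V.support, ‖V α‖ * (wt α x : ℝ) * Real.exp (s * deg α) ≤ Vnorm (fun α => V α) := by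
  classical
  set D := V.support.sup deg with hD
  have hfib : ∑ α ∈ V.support, ‖V α‖ * (wt α x : ℝ) * Real.exp (s * deg α) =
      ∑ n ∈ Finset.range (D + 1), ∑ α ∈ V.support.filter (fun α => deg α = n),
        ‖V α‖ * (wt α x : ℝ) * Real.exp (s * deg α) :=
    (Finset.sum_fiberwise_of_maps_to
      (fun α hα => Finset.mem_range.mpr (Nat.lt_succ_of_le (Finset.le_sup hα))) _).symm
  rw [hfib]
  have hsummable : Summable (fun n : ℕ => (⨆ x : Λ, VnormPart (fun α => V α) n x) * Real.exp n) := by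
    apply summable_of_ne_finset_zero (s := Finset.range (D + 1))
    intro n hn
    have hzero : ∀ y : Λ, VnormPart (fun α => V α) n y = 0 := by
      intro y
      rw [VnormPart_eq]
      refine Finset.sum_eq_zero fun α hα => ?_
      exfalso
      obtain ⟨hmem, hdeg⟩ := Finset.mem_filter.mp hα
      have : deg α ≤ D := Finset.le_sup hmem
      have : n < D + 1 := by omega
      exact hn (Finset.mem_range.mpr this)
    simp only [hzero, ciSup_const, zero_mul]
  refine le_trans ?_ (Summable.sum_le_tsum (Finset.range (D + 1))
    (fun n _ => mul_nonneg (iSup_VnormPart_nonneg _ n) (Real.exp_pos _).le) hsummable)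
  refine Finset.sum_le_sum fun n _ => ?_
  calc ∑ α ∈ V.support.filter (fun α => deg α = n),
        ‖V α‖ * (wt α x : ℝ) * Real.exp (s * deg α)
      ≤ ∑ α ∈ V.support.filter (fun α => deg α = n),
        (wt α x : ℝ) * ‖V α‖ * Real.exp n := by
        refine Finset.sum_le_sum fun α hα => ?_
        have hdα : deg α = n := (Finset.mem_filter.mp hα).2
        rw [hdα, mul_comm ‖V α‖ (wt α x : ℝ)]
        refine mul_le_mul_of_nonneg_left ?_ (by positivity)
        apply Real.exp_le_exp.mpr
        nlinarith [Nat.cast_nonneg (α := ℝ) n]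
    _ = VnormPart (fun α => V α) n x * Real.exp n := by
        rw [VnormPart_eq, Finset.sum_mul]
    _ ≤ (⨆ y : Λ, VnormPart (fun α => V α) n y) * Real.exp n := by
        refine mul_le_mul_of_nonneg_right ?_ (Real.exp_pos _).le
        exact le_ciSup (Set.Finite.bddAbove (Set.finite_range _)) x

/-! ### Calculus lemma -/

lemma deg_exp_bound {s c : ℝ} (hs : 0 ≤ s) (hc : 0 < c) (m : ℕ) :
    (m : ℝ) * Real.exp (s * m - s) ≤ Real.exp ((s + c) * m) / (Real.exp 1 * c) := by
  have he : (0:ℝ) < Real.exp 1 := Real.exp_pos 1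
  have h1 : (m : ℝ) ≤ Real.exp (c * m) / (Real.exp 1 * c) := by
    have h2 : c * m + 1 ≤ Real.exp (c * m - 1) + 1 := by
      have := Real.add_one_le_exp (c * m - 1)
      linarith
    have h3 : Real.exp (c * m - 1) = Real.exp (c * m) / Real.exp 1 := Real.exp_sub _ _
    have h5 : c * m ≤ Real.exp (c * m) / Real.exp 1 := by rw [← h3]; linarith
    rw [le_div_iff₀ (by positivity : (0:ℝ) < Real.exp 1 * c)]
    calc (m:ℝ) * (Real.exp 1 * c) = c * m * Real.exp 1 := by ring
      _ ≤ Real.exp (c * m) := (le_div_iff₀ he).mp h5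
  have h4 : Real.exp (s * m - s) ≤ Real.exp (s * m) := by
    apply Real.exp_le_exp.mpr
    linarith
  calc (m : ℝ) * Real.exp (s * m - s)
      ≤ (Real.exp (c * m) / (Real.exp 1 * c)) * Real.exp (s * m) := by
        exact mul_le_mul h1 h4 (Real.exp_pos _).le (by positivity)
    _ = Real.exp ((s + c) * m) / (Real.exp 1 * c) := by
        rw [div_mul_eq_mul_div, ← Real.exp_add,
          show c * m + s * m = (s + c) * m from by ring]

/-! ### The key single-step estimate -/

lemma key_step [Nonempty Λ] (V : ((Idx × Λ) →₀ ℕ) →₀ ℂ) {s c : ℝ} (hs : 0 ≤ s) (hc : 0 < c)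
    (hsc : s + c ≤ 1) (A : MvPolynomial (Idx × Λ) ℂ) :
    wsum s (pb (Hcl V) A) ≤
      Vnorm (fun α => V α) * (1 / (Real.exp 1 * c)) * wsum (s + c) A := by
  classical
  set B := Vnorm (fun α => V α) with hB
  have hB0 : 0 ≤ B := Vnorm_nonneg _
  have hs1 : s ≤ 1 := by linarith
  have hHcl : Hcl V = ∑ α ∈ V.support, MvPolynomial.monomial α (V α) := by
    refine Finset.sum_congr rfl fun α _ => ?_
    rw [monom, MvPolynomial.C_mul_monomial, mul_one]
  have hA : A = ∑ γ ∈ A.support, MvPolynomial.monomial γ (A.coeff γ) :=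
    (MvPolynomial.support_sum_monomial_coeff A).symm
  conv_lhs => rw [hHcl, hA, pb_sum_left]
  refine (wsum_sum_le _ _ _).trans ?_
  have step1 : ∀ α ∈ V.support,
      wsum s (pb (MvPolynomial.monomial α (V α)) (∑ γ ∈ A.support,
        MvPolynomial.monomial γ (A.coeff γ))) ≤
      ∑ γ ∈ A.support, ∑ x : Λ, ‖V α‖ * ‖A.coeff γ‖ * ((wt α x : ℝ) * (wt γ x : ℝ)) *
        Real.exp (s * deg α + s * deg γ - s) := by
    intro α _
    rw [pb_sum_right]
    refine (wsum_sum_le _ _ _).trans (Finset.sum_le_sum fun γ _ => ?_)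
    exact wsum_pb_monomial_le α γ (V α) (A.coeff γ)
  refine (Finset.sum_le_sum step1).trans ?_
  rw [Finset.sum_comm]
  have step2 : ∀ γ ∈ A.support,
      ∑ α ∈ V.support, ∑ x : Λ, ‖V α‖ * ‖A.coeff γ‖ * ((wt α x : ℝ) * (wt γ x : ℝ)) *
        Real.exp (s * deg α + s * deg γ - s) ≤
      B * (1 / (Real.exp 1 * c)) * (‖A.coeff γ‖ * Real.exp ((s + c) * deg γ)) := by
    intro γ _
    rw [Finset.sum_comm]
    have inner : ∀ x : Λ,
        ∑ α ∈ V.support, ‖V α‖ * ‖A.coeff γ‖ * ((wt α x : ℝ) * (wt γ x : ℝ)) *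
          Real.exp (s * deg α + s * deg γ - s) ≤
        B * (‖A.coeff γ‖ * (wt γ x : ℝ) * Real.exp (s * deg γ - s)) := by
      intro x
      have hrw : ∀ α : (Idx × Λ) →₀ ℕ,
          ‖V α‖ * ‖A.coeff γ‖ * ((wt α x : ℝ) * (wt γ x : ℝ)) *
            Real.exp (s * deg α + s * deg γ - s) =
          (‖V α‖ * (wt α x : ℝ) * Real.exp (s * deg α)) *
            (‖A.coeff γ‖ * (wt γ x : ℝ) * Real.exp (s * deg γ - s)) := by
        intro α
        rw [show s * deg α + s * deg γ - s = s * deg α + (s * deg γ - s) from by ring,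
          Real.exp_add]
        ring
      calc ∑ α ∈ V.support, ‖V α‖ * ‖A.coeff γ‖ * ((wt α x : ℝ) * (wt γ x : ℝ)) *
            Real.exp (s * deg α + s * deg γ - s)
          = (∑ α ∈ V.support, ‖V α‖ * (wt α x : ℝ) * Real.exp (s * deg α)) *
            (‖A.coeff γ‖ * (wt γ x : ℝ) * Real.exp (s * deg γ - s)) := by
            rw [Finset.sum_mul]
            exact Finset.sum_congr rfl fun α _ => hrw α
        _ ≤ B * (‖A.coeff γ‖ * (wt γ x : ℝ) * Real.exp (s * deg γ - s)) := by
            refine mul_le_mul_of_nonneg_right ?_ (by positivity)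
            exact sum_V_bound V hs hs1 x
    calc ∑ x : Λ, ∑ α ∈ V.support, ‖V α‖ * ‖A.coeff γ‖ * ((wt α x : ℝ) * (wt γ x : ℝ)) *
          Real.exp (s * deg α + s * deg γ - s)
        ≤ ∑ x : Λ, B * (‖A.coeff γ‖ * (wt γ x : ℝ) * Real.exp (s * deg γ - s)) :=
          Finset.sum_le_sum fun x _ => inner x
      _ = B * ‖A.coeff γ‖ * Real.exp (s * deg γ - s) * (deg γ : ℝ) := by
          have hrw2 : ∀ x : Λ, B * (‖A.coeff γ‖ * (wt γ x : ℝ) * Real.exp (s * deg γ - s)) =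
              (B * ‖A.coeff γ‖ * Real.exp (s * deg γ - s)) * (wt γ x : ℝ) := fun x => by ring
          rw [Finset.sum_congr rfl fun x _ => hrw2 x, ← Finset.mul_sum]
          have hw : ∑ x : Λ, (wt γ x : ℝ) = (deg γ : ℝ) := by
            rw [← Nat.cast_sum, wt_sum]
          rw [hw]
      _ ≤ B * (1 / (Real.exp 1 * c)) * (‖A.coeff γ‖ * Real.exp ((s + c) * deg γ)) := by
          have hd := deg_exp_bound hs hc (deg γ)
          calc B * ‖A.coeff γ‖ * Real.exp (s * deg γ - s) * (deg γ : ℝ)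
              = B * ‖A.coeff γ‖ * ((deg γ : ℝ) * Real.exp (s * (deg γ : ℝ) - s)) := by ring
            _ ≤ B * ‖A.coeff γ‖ * (Real.exp ((s + c) * deg γ) / (Real.exp 1 * c)) :=
                mul_le_mul_of_nonneg_left hd (by positivity)
            _ = B * (1 / (Real.exp 1 * c)) * (‖A.coeff γ‖ * Real.exp ((s + c) * deg γ)) := by
                ring
  refine (Finset.sum_le_sum step2).trans (le_of_eq ?_)
  rw [wsum, Finset.mul_sum]

end AuxProof

lemma pow_le_factorial_mul_exp (n : ℕ) : (n : ℝ) ^ n ≤ (n.factorial : ℝ) * Real.exp 1 ^ n := by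
  have he1 : (1:ℝ) ≤ Real.exp 1 := by linarith [Real.add_one_le_exp (1:ℝ)]
  induction n with
  | zero => simp
  | succ n ih =>
    push_cast
    have hstep : ((n:ℝ) + 1) ^ n ≤ Real.exp 1 * (n:ℝ) ^ n := by
      rcases Nat.eq_zero_or_pos n with rfl | hn
      · simpa using he1.le.trans (le_refl _) |>.trans (le_refl _) |>.trans_eq rfl
      · have hnR : (0:ℝ) < n := Nat.cast_pos.mpr hn
        have h1 : ((n:ℝ) + 1) = (n:ℝ) * (1 + 1/(n:ℝ)) := by field_simp
        rw [h1, mul_pow]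
        have h2 : (1 + 1/(n:ℝ)) ^ n ≤ Real.exp 1 := by
          have h3 : (1 + 1/(n:ℝ)) ≤ Real.exp (1/(n:ℝ)) := by
            have := Real.add_one_le_exp (1/(n:ℝ)); linarith
          calc (1 + 1/(n:ℝ)) ^ n ≤ Real.exp (1/(n:ℝ)) ^ n :=
                pow_le_pow_left₀ (by positivity) h3 n
            _ = Real.exp ((n : ℕ) * (1/(n:ℝ))) := (Real.exp_nat_mul _ n).symm
            _ = Real.exp 1 := by rw [mul_one_div, div_self (ne_of_gt hnR)]
        calc (n:ℝ)^n * (1 + 1/(n:ℝ))^n ≤ (n:ℝ)^n * Real.exp 1 :=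
              mul_le_mul_of_nonneg_left h2 (by positivity)
          _ = Real.exp 1 * (n:ℝ)^n := mul_comm _ _
    calc ((n:ℝ)+1)^(n+1) = ((n:ℝ)+1) * ((n:ℝ)+1)^n := by rw [pow_succ]; ring
      _ ≤ ((n:ℝ)+1) * (Real.exp 1 * (n:ℝ)^n) :=
          mul_le_mul_of_nonneg_left hstep (by positivity)
      _ ≤ ((n:ℝ)+1) * (Real.exp 1 * ((n.factorial : ℝ) * Real.exp 1 ^ n)) := by
          refine mul_le_mul_of_nonneg_left
            (mul_le_mul_of_nonneg_left ih (Real.exp_pos _).le) (by positivity)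
      _ = ((n+1).factorial : ℝ) * Real.exp 1 ^ (n+1) := by
          rw [Nat.factorial_succ]; push_cast; ring

lemma div_pow_le_factorial (l : ℕ) : ((l:ℝ)/Real.exp 1)^l ≤ (l.factorial : ℝ) := by
  rw [div_pow, div_le_iff₀ (by positivity)]
  exact pow_le_factorial_mul_exp l

/-- **Nested Poisson bracket bound.**
For the Hamilton function `H_Λ = Σ_α V(α) M^α` on the phase space
`Ξ_Λ = Π_{x∈Λ} B̄₁(0)`, the `l`-fold nested Poisson bracket satisfies
`‖{H_Λ, M^β}^{(l)}‖_∞ ≤ l! e^{|β|} ‖V‖^l`, where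
`‖V‖ = Σ_n sup_x Σ_{|α|=n} |α(x)| |V(α)| e^n`. -/
theorem nested_bracket_bound {Λ : Type} [Fintype Λ] [DecidableEq Λ] [Nonempty Λ]
    (V : ((Idx × Λ) →₀ ℕ) →₀ ℂ) (β : (Idx × Λ) →₀ ℕ) (l : ℕ) :
    supNorm (pbIter (Hcl V) l (monom β)) ≤
      (l.factorial : ℝ) * Real.exp (deg β) * (Vnorm fun α => V α) ^ l := by
  classical
  rcases Nat.eq_zero_or_pos l with rfl | hl
  · simp only [pow_zero, Nat.factorial_zero, Nat.cast_one, one_mul, mul_one]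
    rw [show pbIter (Hcl V) 0 (monom β) = (monom β : MvPolynomial (Idx × Λ) ℂ) from rfl]
    refine (supNorm_le_wsum_zero _).trans ?_
    rw [wsum_monom, zero_mul, Real.exp_zero]
    calc (1:ℝ) = Real.exp 0 := Real.exp_zero.symm
      _ ≤ Real.exp (deg β) := Real.exp_le_exp.mpr (by positivity)
  · set B := Vnorm (fun α => V α) with hB
    have hB0 : 0 ≤ B := Vnorm_nonneg _
    have hlR : (0:ℝ) < l := Nat.cast_pos.mpr hl
    have hl0 : (l:ℝ) ≠ 0 := ne_of_gt hlR
    have main : ∀ m : ℕ, m ≤ l →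
        wsum (1 - (m:ℝ) / l) (pbIter (Hcl V) m (monom β)) ≤
          Real.exp (deg β) * (B * l / Real.exp 1) ^ m := by
      intro m
      induction m with
      | zero =>
        intro _
        rw [show pbIter (Hcl V) 0 (monom β) = (monom β : MvPolynomial (Idx × Λ) ℂ) from rfl]
        simp only [Nat.cast_zero, zero_div, sub_zero, pow_zero, mul_one]
        rw [wsum_monom, one_mul]
      | succ m ih =>
        intro hml
        have hm : m ≤ l := Nat.le_of_succ_le hml
        have ihm := ih hm
        have hs : (0:ℝ) ≤ 1 - ((m+1 : ℕ):ℝ)/l := by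
          rw [sub_nonneg, div_le_one hlR]
          exact_mod_cast hml
        have hc : (0:ℝ) < 1/(l:ℝ) := by positivity
        have heq : (1 : ℝ) - ((m+1 : ℕ):ℝ) / l + 1/l = 1 - (m:ℝ)/l := by
          push_cast; field_simp; ring
        have hsc : (1 : ℝ) - ((m+1 : ℕ):ℝ)/l + 1/l ≤ 1 := by
          rw [heq]
          have : (0:ℝ) ≤ (m:ℝ)/l := by positivity
          linarith
        have hstep := key_step V hs hc hsc (pbIter (Hcl V) m (monom β))
        rw [heq] at hstep
        rw [show pbIter (Hcl V) (m+1) (monom β)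
            = pb (Hcl V) (pbIter (Hcl V) m (monom β)) from rfl]
        refine hstep.trans ?_
        calc B * (1 / (Real.exp 1 * (1/(l:ℝ)))) * wsum (1 - (m:ℝ)/l) (pbIter (Hcl V) m (monom β))
            ≤ B * (1 / (Real.exp 1 * (1/(l:ℝ)))) * (Real.exp (deg β) * (B * l / Real.exp 1)^m) :=
              mul_le_mul_of_nonneg_left ihm (by positivity)
          _ = Real.exp (deg β) * (B * l / Real.exp 1)^(m+1) := by
              rw [pow_succ]
              have he : Real.exp 1 ≠ 0 := (Real.exp_pos 1).ne'
              field_simp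
    have hfin := main l le_rfl
    rw [show (1 : ℝ) - (l:ℝ)/l = 0 from by field_simp; ring] at hfin
    refine (supNorm_le_wsum_zero _).trans (hfin.trans ?_)
    calc Real.exp (deg β) * (B * l / Real.exp 1) ^ l
        = Real.exp (deg β) * (B ^ l * ((l:ℝ)/Real.exp 1) ^ l) := by
          rw [← mul_pow, show B * ((l:ℝ)/Real.exp 1) = B * l / Real.exp 1 from by ring]
      _ ≤ Real.exp (deg β) * (B ^ l * (l.factorial : ℝ)) := by
          refine mul_le_mul_of_nonneg_left
            (mul_le_mul_of_nonneg_left (div_pow_le_factorial l) (by positivity))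
            (Real.exp_pos _).le
      _ = (l.factorial : ℝ) * Real.exp (deg β) * B ^ l := by ring
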